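/- Let J = (1/N)L_N and H as above. The eigenvalues λ_j of the circulant matrix 𝒥 = J + γH satisfy Re(λ_j) = −(γ/N²)(n + 1/2) for j = 1, ..., N−1 and λ_0 = −γ n(2n+1)/N². Hence if γ > 0 all eigenvalues of 𝒥 have negative real part, and if γ < 0 all have positive real part. -/

import Mathlib

open Matrix

/-- The skew-symmetric circulant payoff matrix of the complete odd circulant game:
first row `(0, -1, 1, -1, 1, …, -1, 1)`, each row a cyclic shift of the previous. -/
noncomputable def Lmat (N : ℕ) : Matrix (Fin N) (Fin N) ℝ :=
  Matrix.of fun i j => if i = j then 0 else (-1 : ℝ) ^ ((j.val + N - i.val) % N)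

/-- The 0-1 circulant tournament matrix: first row has ones exactly at positions
`3, 5, …, N` (1-indexed), i.e. at even nonzero cyclic offsets. -/
noncomputable def Mmat (N : ℕ) : Matrix (Fin N) (Fin N) ℝ :=
  Matrix.of fun i j =>
    if i ≠ j ∧ Even ((j.val + N - i.val) % N) then (1 : ℝ) else 0

/-- The `N × N` all-ones matrix. -/
noncomputable def onesMat (N : ℕ) : Matrix (Fin N) (Fin N) ℝ := Matrix.of fun _ _ => (1 : ℝ)

/-- `H = (1/N²)(N(M_N − 1_N) + 1_N)`, the Jacobian of the controlled part of the
replicator dynamics at the interior equilibrium. -/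
noncomputable def Hmat (N : ℕ) : Matrix (Fin N) (Fin N) ℝ :=
  ((1 : ℝ) / (N : ℝ) ^ 2) • ((N : ℝ) • (Mmat N - onesMat N) + onesMat N)

lemma re_two_div_one_add (z : ℂ) (h1 : Complex.normSq z = 1) (hz : z ≠ -1) :
    (2 / (1 + z)).re = 1 := by
  have hre : z.re * z.re + z.im * z.im = 1 := by
    rw [← Complex.normSq_apply, h1]
  have hns : Complex.normSq (1 + z) = 2 + 2 * z.re := by
    simp [Complex.normSq_apply]
    nlinarith [hre]
  have hd : (2:ℝ) + 2 * z.re ≠ 0 := by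
    intro h
    have hre' : z.re = -1 := by linarith
    have him : z.im = 0 := by nlinarith [hre]
    exact hz (Complex.ext (by simp [hre']) (by simp [him]))
  rw [Complex.div_re, hns]
  simp
  field_simp
  have hd' : (1:ℝ) + z.re ≠ 0 := fun h => hd (by linarith)
  exact div_self hd'

/-- Eigenvalues of the circulant Jacobian `𝒥 = (1/N)L_N + γH`: the eigenvalue
`λ_j = ∑_k 𝒥_{0,k} ω_j^k` (with `ω_j = e^{2πij/N}`) satisfies
`Re(λ_0) = −γ n(2n+1)/N²` and `Re(λ_j) = −(γ/N²)(n + 1/2)` for `1 ≤ j ≤ N−1`;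
hence all eigenvalues have negative real part when `γ > 0` and positive real part
when `γ < 0`. -/
theorem stmt_13 (n : ℕ) (hn : 1 ≤ n) (γ : ℝ) :
    let N := 2 * n + 1
    let J : Matrix (Fin N) (Fin N) ℝ := ((1 : ℝ) / (N : ℝ)) • Lmat N + γ • Hmat N
    let lam : ℕ → ℂ := fun j => ∑ k : Fin N,
      (J 0 k : ℂ) * Complex.exp (2 * (Real.pi : ℂ) * Complex.I * (j : ℂ) * (k.val : ℂ) / (N : ℂ))
    (lam 0).re = -γ * n * (2 * n + 1) / (N : ℝ) ^ 2 ∧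
    (∀ j : ℕ, 1 ≤ j → j ≤ N - 1 → (lam j).re = -(γ / (N : ℝ) ^ 2) * ((n : ℝ) + 1 / 2)) ∧
    (γ > 0 → ∀ j : ℕ, j ≤ N - 1 → (lam j).re < 0) ∧
    (γ < 0 → ∀ j : ℕ, j ≤ N - 1 → (lam j).re > 0) := by
  intro N J lam
  haveI : NeZero N := ⟨by omega⟩
  have hNval : N = 2 * n + 1 := rfl
  have hNpos : 0 < N := by omega
  have hNne : (N : ℝ) ≠ 0 := Nat.cast_ne_zero.mpr (by omega)
  have hNCne : (N : ℂ) ≠ 0 := Nat.cast_ne_zero.mpr (by omega)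
  have hNcast : (N : ℝ) = 2 * (n : ℝ) + 1 := by rw [hNval]; push_cast; ring
  have hOddN : Odd N := ⟨n, by omega⟩
  set A : ℝ := γ * (2 - (N:ℝ)) / (2 * (N:ℝ)^2) with hA
  set B : ℝ := 1 / (N:ℝ) + γ / (2*(N:ℝ)) with hB
  set C : ℝ := -(γ + 1) / (N:ℝ) with hC
  -- entries of the first row
  have hJ : ∀ k : Fin N, J 0 k = A + B * (-1:ℝ)^(k:ℕ) + (if (k:ℕ) = 0 then C else 0) := by
    intro k
    have hklt : (k:ℕ) < N := k.isLt
    have hk : ((k:ℕ) + N - ((0: Fin N):ℕ)) % N = (k:ℕ) := by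
      rw [Fin.val_zero, Nat.sub_zero, Nat.add_mod_right, Nat.mod_eq_of_lt hklt]
    simp only [J, Matrix.add_apply, Matrix.smul_apply, smul_eq_mul, Hmat, Lmat, Mmat, onesMat,
      Matrix.of_apply, Matrix.sub_apply, hk]
    rcases eq_or_ne k 0 with rfl | hkne
    · rw [if_pos rfl, if_neg (by simp), if_pos (by simp)]
      rw [Fin.val_zero, pow_zero, hA, hB, hC]
      field_simp
      ring
    · have hne' : ¬ ((0:Fin N) = k) := fun h => hkne h.symm
      have hvne : ¬ ((k:ℕ) = 0) := by
        intro h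
        exact hkne (Fin.ext (by simp [h]))
      rw [if_neg hne', if_neg hvne]
      rcases Nat.even_or_odd (k:ℕ) with he | ho
      · rw [if_pos ⟨hne', he⟩, Even.neg_one_pow he, hA, hB]
        field_simp
        ring
      · rw [if_neg (fun hcond => (Nat.not_even_iff_odd.mpr ho) hcond.2),
          Odd.neg_one_pow ho, hA, hB]
        field_simp
        ring
  -- decompose lam j into geometric sums
  have hlam : ∀ j : ℕ, lam j =
      (A:ℂ) * (∑ m ∈ Finset.range N,
          (Complex.exp (2 * (Real.pi : ℂ) * Complex.I * (j : ℂ) / (N : ℂ))) ^ m)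
      + (B:ℂ) * (∑ m ∈ Finset.range N,
          (-(Complex.exp (2 * (Real.pi : ℂ) * Complex.I * (j : ℂ) / (N : ℂ)))) ^ m)
      + (C:ℂ) := by
    intro j
    set ω : ℂ := Complex.exp (2 * (Real.pi : ℂ) * Complex.I * (j : ℂ) / (N : ℂ)) with hω
    have hexp : ∀ k : Fin N,
        Complex.exp (2 * (Real.pi : ℂ) * Complex.I * (j : ℂ) * ((k:ℕ) : ℂ) / (N : ℂ))
          = ω ^ (k:ℕ) := by
      intro k
      rw [hω, ← Complex.exp_nat_mul]
      congr 1
      ring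
    have step1 : lam j = ∑ m ∈ Finset.range N,
        (((A:ℂ) + (B:ℂ) * (-1)^m + (if m = 0 then (C:ℂ) else 0)) * ω ^ m) := by
      rw [← Fin.sum_univ_eq_sum_range
        (fun m => (((A:ℂ) + (B:ℂ) * (-1)^m + (if m = 0 then (C:ℂ) else 0)) * ω ^ m)) N]
      simp only [lam]
      apply Finset.sum_congr rfl
      intro k _
      rw [hJ k, hexp k]
      push_cast
      split_ifs <;> push_cast <;> ring
    rw [step1]
    have expand : ∀ m ∈ Finset.range N,
        (((A:ℂ) + (B:ℂ) * (-1)^m + (if m = 0 then (C:ℂ) else 0)) * ω ^ m)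
          = (A:ℂ) * ω^m + (B:ℂ) * (-ω)^m + (if m = 0 then (C:ℂ) else 0) := by
      intro m _
      rcases eq_or_ne m 0 with h | h
      · subst h; simp
      · rw [if_neg h, neg_pow ω m]
        ring
    rw [Finset.sum_congr rfl expand, Finset.sum_add_distrib, Finset.sum_add_distrib,
      ← Finset.mul_sum, ← Finset.mul_sum,
      Finset.sum_ite_eq' (Finset.range N) 0 (fun _ => (C:ℂ))]
    rw [if_pos (Finset.mem_range.mpr hNpos)]
  -- part 1 : j = 0
  have part1 : (lam 0).re = -γ * n * (2 * n + 1) / (N : ℝ) ^ 2 := by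
    have hω0 : Complex.exp (2 * (Real.pi : ℂ) * Complex.I * ((0:ℕ) : ℂ) / (N : ℂ)) = 1 := by
      norm_num
    have hT : ∑ m ∈ Finset.range N, (-(1:ℂ)) ^ m = 1 := by
      rw [geom_sum_eq (by norm_num) N, Odd.neg_one_pow hOddN]
      norm_num
    have h0 : lam 0 = (((A * N + B + C : ℝ)) : ℂ) := by
      rw [hlam 0, hω0, hT]
      simp only [one_pow, Finset.sum_const, Finset.card_range, nsmul_eq_mul, mul_one]
      push_cast
      ring
    rw [h0, Complex.ofReal_re, hA, hB, hC, hNcast]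
    field_simp
    ring
  -- part 2
  have part2 : ∀ j : ℕ, 1 ≤ j → j ≤ N - 1 →
      (lam j).re = -(γ / (N : ℝ) ^ 2) * ((n : ℝ) + 1 / 2) := by
    intro j hj1 hj2
    set ω : ℂ := Complex.exp (2 * (Real.pi : ℂ) * Complex.I * (j : ℂ) / (N : ℂ)) with hω
    have hωN : ω ^ N = 1 := by
      rw [hω, ← Complex.exp_nat_mul]
      have harg : (N:ℂ) * (2 * (Real.pi : ℂ) * Complex.I * (j : ℂ) / (N : ℂ))
          = ((j:ℤ) : ℂ) * (2 * (Real.pi : ℂ) * Complex.I) := by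
        rw [Int.cast_natCast]
        field_simp
      rw [harg, Complex.exp_int_mul_two_pi_mul_I]
    have hω1 : ω ≠ 1 := by
      intro h
      rw [hω, Complex.exp_eq_one_iff] at h
      obtain ⟨m, hm⟩ := h
      have hjm : (j:ℂ) = (m:ℂ) * (N:ℂ) := by
        have h2 : (2 * (Real.pi:ℂ) * Complex.I) ≠ 0 := Complex.two_pi_I_ne_zero
        field_simp at hm
        have key : (2 * (Real.pi:ℂ) * Complex.I) * ((j:ℂ) - (m:ℂ) * (N:ℂ)) = 0 := by
          linear_combination (2 * (Real.pi:ℂ) * Complex.I) * hm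
        rcases mul_eq_zero.mp key with h' | h'
        · exact absurd h' h2
        · linear_combination h'
      have hjm' : (j:ℤ) = m * (N:ℤ) := by exact_mod_cast hjm
      have hdvd : (N:ℤ) ∣ (j:ℤ) := ⟨m, by linarith⟩
      have hjpos : (0:ℤ) < (j:ℤ) := by exact_mod_cast hj1
      have := Int.le_of_dvd hjpos hdvd
      have hjlt : (j:ℤ) < (N:ℤ) := by
        have : j < N := by omega
        exact_mod_cast this
      linarith
    have hωneg : ω ≠ -1 := by
      intro h
      rw [h, Odd.neg_one_pow hOddN] at hωN
      norm_num at hωN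
    have hS : ∑ m ∈ Finset.range N, ω ^ m = 0 := by
      rw [geom_sum_eq hω1 N, hωN]
      simp
    have h1ω : (1:ℂ) + ω ≠ 0 := by
      intro h
      exact hωneg (by linear_combination h)
    have hT : ∑ m ∈ Finset.range N, (-ω) ^ m = 2 / (1 + ω) := by
      have hne : -ω ≠ 1 := by
        intro h
        exact hωneg (by linear_combination -h)
      rw [geom_sum_eq hne N, Odd.neg_pow hOddN, hωN]
      have h2 : -ω - 1 ≠ 0 := by
        intro h
        exact h1ω (by linear_combination -h)
      rw [div_eq_div_iff h2 h1ω]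
      ring
    have hns : Complex.normSq ω = 1 := by
      have hωform : ω = Complex.exp (((2 * Real.pi * (j:ℝ) / (N:ℝ) : ℝ) : ℂ) * Complex.I) := by
        rw [hω]
        congr 1
        push_cast
        ring
      have habs : ‖ω‖ = 1 := by
        rw [hωform]; exact Complex.norm_exp_ofReal_mul_I _
      rw [Complex.normSq_eq_norm_sq, habs]; norm_num
    have hre : (lam j).re = B * 1 + C := by
      rw [hlam j, ← hω, hS, hT]
      rw [mul_zero, zero_add]
      simp only [Complex.add_re, Complex.re_ofReal_mul, Complex.ofReal_re]
      rw [re_two_div_one_add ω hns hωneg]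
    rw [hre, hB, hC, hNcast]
    field_simp
    ring
  refine ⟨part1, part2, ?_, ?_⟩
  · intro hγ j hj
    have hn' : (0:ℝ) < (n:ℝ) := by exact_mod_cast hn
    have hN2 : (0:ℝ) < (N:ℝ)^2 := by positivity
    rcases Nat.eq_zero_or_pos j with rfl | h1
    · rw [part1]
      have hnum : (0:ℝ) < γ * (n:ℝ) * (2 * (n:ℝ) + 1) :=
        mul_pos (mul_pos hγ hn') (by linarith)
      have heq : -γ * (n:ℝ) * (2 * (n:ℝ) + 1) / (N:ℝ)^2
          = -(γ * (n:ℝ) * (2 * (n:ℝ) + 1) / (N:ℝ)^2) := by ring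
      rw [heq]
      linarith [div_pos hnum hN2]
    · rw [part2 j h1 hj]
      have h1' : (0:ℝ) < γ / (N:ℝ)^2 := div_pos hγ hN2
      have h2' : (0:ℝ) < (n:ℝ) + 1/2 := by linarith
      nlinarith [mul_pos h1' h2']
  · intro hγ j hj
    have hn' : (0:ℝ) < (n:ℝ) := by exact_mod_cast hn
    have hN2 : (0:ℝ) < (N:ℝ)^2 := by positivity
    rcases Nat.eq_zero_or_pos j with rfl | h1
    · rw [part1]
      have hnum : (0:ℝ) < -γ * (n:ℝ) * (2 * (n:ℝ) + 1) :=
        mul_pos (mul_pos (by linarith) hn') (by linarith)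
      exact div_pos hnum hN2
    · rw [part2 j h1 hj]
      have h1' : (0:ℝ) < -(γ / (N:ℝ)^2) := by
        have := div_neg_of_neg_of_pos hγ hN2
        linarith
      have h2' : (0:ℝ) < (n:ℝ) + 1/2 := by linarith
      exact mul_pos h1' h2'
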